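/- Let K be an algebraically closed field and let φ : K[x₁,x₂,x₃,y₁,y₂,y₃] → K[u₁,u₂,u₃] be the K-algebra homomorphism with φ(x₁) = u₁⁶, φ(x₂) = u₂⁶, φ(x₃) = u₃⁶, φ(y₁) = u₁u₃, φ(y₂) = u₂u₃, φ(y₃) = u₁⁴u₂⁴u₃². Then the zero set in K⁶ of ker φ equals the set of common zeros of the four binomials F₁ = y₁⁶ − x₁x₃, F₂ = y₂⁶ − x₂x₃, F_{3,2} = y₃² − x₁x₂y₁²y₂², and F_{3,3} = y₃³ − x₁²x₂²x₃. -/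

import Mathlib

open MvPolynomial

/-- For `K` algebraically closed and
`φ : K[x₁,x₂,x₃,y₁,y₂,y₃] → K[u₁,u₂,u₃]` with `φ(xᵢ) = uᵢ⁶`, `φ(y₁) = u₁u₃`,
`φ(y₂) = u₂u₃`, `φ(y₃) = u₁⁴u₂⁴u₃²`, the zero set in `K⁶` of `ker φ` equals the set of
common zeros of the four binomials `F₁ = y₁⁶−x₁x₃`, `F₂ = y₂⁶−x₂x₃`,
`F_{3,2} = y₃²−x₁x₂y₁²y₂²`, `F_{3,3} = y₃³−x₁²x₂²x₃`. -/
theorem stmt17 (K : Type*) [Field K] [IsAlgClosed K]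
    (φ : MvPolynomial (Fin 3 ⊕ Fin 3) K →ₐ[K] MvPolynomial (Fin 3) K)
    (hφx1 : φ (X (Sum.inl 0)) = X 0 ^ 6)
    (hφx2 : φ (X (Sum.inl 1)) = X 1 ^ 6)
    (hφx3 : φ (X (Sum.inl 2)) = X 2 ^ 6)
    (hφy1 : φ (X (Sum.inr 0)) = X 0 * X 2)
    (hφy2 : φ (X (Sum.inr 1)) = X 1 * X 2)
    (hφy3 : φ (X (Sum.inr 2)) = X 0 ^ 4 * X 1 ^ 4 * X 2 ^ 2) :
    {a : Fin 3 ⊕ Fin 3 → K | ∀ F ∈ RingHom.ker φ, eval a F = 0} =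
    {a : Fin 3 ⊕ Fin 3 → K |
      eval a (X (Sum.inr 0) ^ 6 - X (Sum.inl 0) * X (Sum.inl 2) :
        MvPolynomial (Fin 3 ⊕ Fin 3) K) = 0 ∧
      eval a (X (Sum.inr 1) ^ 6 - X (Sum.inl 1) * X (Sum.inl 2) :
        MvPolynomial (Fin 3 ⊕ Fin 3) K) = 0 ∧
      eval a (X (Sum.inr 2) ^ 2 -
          X (Sum.inl 0) * X (Sum.inl 1) * X (Sum.inr 0) ^ 2 * X (Sum.inr 1) ^ 2 :
        MvPolynomial (Fin 3 ⊕ Fin 3) K) = 0 ∧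
      eval a (X (Sum.inr 2) ^ 3 - X (Sum.inl 0) ^ 2 * X (Sum.inl 1) ^ 2 * X (Sum.inl 2) :
        MvPolynomial (Fin 3 ⊕ Fin 3) K) = 0} := by
  ext a
  simp only [Set.mem_setOf_eq, eval_sub, eval_pow, eval_mul, eval_X]
  constructor
  · intro h
    refine ⟨?_, ?_, ?_, ?_⟩
    · have := h (X (Sum.inr 0) ^ 6 - X (Sum.inl 0) * X (Sum.inl 2)) (by
        simp only [RingHom.mem_ker, AlgHom.toRingHom_eq_coe, RingHom.coe_coe,
          map_sub, map_pow, map_mul, hφx1, hφx3, hφy1]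
        ring)
      simpa using this
    · have := h (X (Sum.inr 1) ^ 6 - X (Sum.inl 1) * X (Sum.inl 2)) (by
        simp only [RingHom.mem_ker, AlgHom.toRingHom_eq_coe, RingHom.coe_coe,
          map_sub, map_pow, map_mul, hφx2, hφx3, hφy2]
        ring)
      simpa using this
    · have := h (X (Sum.inr 2) ^ 2 -
          X (Sum.inl 0) * X (Sum.inl 1) * X (Sum.inr 0) ^ 2 * X (Sum.inr 1) ^ 2) (by
        simp only [RingHom.mem_ker, AlgHom.toRingHom_eq_coe, RingHom.coe_coe,
          map_sub, map_pow, map_mul, hφx1, hφx2, hφy1, hφy2, hφy3]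
        ring)
      simpa using this
    · have := h (X (Sum.inr 2) ^ 3 -
          X (Sum.inl 0) ^ 2 * X (Sum.inl 1) ^ 2 * X (Sum.inl 2)) (by
        simp only [RingHom.mem_ker, AlgHom.toRingHom_eq_coe, RingHom.coe_coe,
          map_sub, map_pow, map_mul, hφx1, hφx2, hφx3, hφy3]
        ring)
      simpa using this
  · rintro ⟨h1, h2, h3, h4⟩ F hF
    rw [sub_eq_zero] at h1 h2 h3 h4
    -- find a parametrizing point u
    obtain ⟨u1, u2, u3, e1, e2, e3, e4, e5, e6⟩ :
        ∃ u1 u2 u3 : K, u1 ^ 6 = a (Sum.inl 0) ∧ u2 ^ 6 = a (Sum.inl 1) ∧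
          u3 ^ 6 = a (Sum.inl 2) ∧ u1 * u3 = a (Sum.inr 0) ∧ u2 * u3 = a (Sum.inr 1) ∧
          u1 ^ 4 * u2 ^ 4 * u3 ^ 2 = a (Sum.inr 2) := by
      by_cases hx3 : a (Sum.inl 2) = 0
      · obtain ⟨r1, hr1⟩ := IsAlgClosed.exists_pow_nat_eq (a (Sum.inl 0)) (n := 6) (by norm_num)
        obtain ⟨r2, hr2⟩ := IsAlgClosed.exists_pow_nat_eq (a (Sum.inl 1)) (n := 6) (by norm_num)
        have hy1 : a (Sum.inr 0) = 0 := by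
          have : a (Sum.inr 0) ^ 6 = 0 := by rw [h1, hx3, mul_zero]
          exact pow_eq_zero_iff (by norm_num) |>.mp this
        have hy2 : a (Sum.inr 1) = 0 := by
          have : a (Sum.inr 1) ^ 6 = 0 := by rw [h2, hx3, mul_zero]
          exact pow_eq_zero_iff (by norm_num) |>.mp this
        have hy3 : a (Sum.inr 2) = 0 := by
          have : a (Sum.inr 2) ^ 2 = 0 := by rw [h3, hy1]; ring
          exact pow_eq_zero_iff (by norm_num) |>.mp this
        exact ⟨r1, r2, 0, hr1, hr2, by simp [hx3], by simp [hy1], by simp [hy2],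
          by simp [hy3]⟩
      · obtain ⟨u3, hu3⟩ := IsAlgClosed.exists_pow_nat_eq (a (Sum.inl 2)) (n := 6) (by norm_num)
        have hu3ne : u3 ≠ 0 := by
          intro h0; apply hx3; rw [← hu3, h0]; ring
        refine ⟨a (Sum.inr 0) / u3, a (Sum.inr 1) / u3, u3, ?_, ?_, hu3, ?_, ?_, ?_⟩
        · rw [div_pow, hu3, h1, mul_div_assoc, div_self hx3, mul_one]
        · rw [div_pow, hu3, h2, mul_div_assoc, div_self hx3, mul_one]
        · field_simp
        · field_simp
        · -- need (y₁/u₃)⁴ (y₂/u₃)⁴ u₃² = y₃, i.e. y₁⁴y₂⁴ = y₃ x₃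
          have key : a (Sum.inr 0) ^ 4 * a (Sum.inr 1) ^ 4 = a (Sum.inr 2) * a (Sum.inl 2) := by
            have hsq : (a (Sum.inr 2) * a (Sum.inl 2)) ^ 2 =
                (a (Sum.inr 0) ^ 4 * a (Sum.inr 1) ^ 4) ^ 2 := by
              linear_combination a (Sum.inl 2) ^ 2 * h3 -
                a (Sum.inr 0) ^ 2 * a (Sum.inr 1) ^ 8 * h1 -
                a (Sum.inl 0) * a (Sum.inl 2) * a (Sum.inr 0) ^ 2 * a (Sum.inr 1) ^ 2 * h2
            have hcu : (a (Sum.inr 2) * a (Sum.inl 2)) ^ 3 =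
                (a (Sum.inr 0) ^ 4 * a (Sum.inr 1) ^ 4) ^ 3 := by
              linear_combination a (Sum.inl 2) ^ 3 * h4 -
                (a (Sum.inr 0) ^ 6 + a (Sum.inl 0) * a (Sum.inl 2)) * a (Sum.inr 1) ^ 12 * h1 -
                a (Sum.inl 0) ^ 2 * a (Sum.inl 2) ^ 2 *
                  (a (Sum.inr 1) ^ 6 + a (Sum.inl 1) * a (Sum.inl 2)) * h2
            set A := a (Sum.inr 2) * a (Sum.inl 2)
            set B := a (Sum.inr 0) ^ 4 * a (Sum.inr 1) ^ 4
            by_cases hA0 : A = 0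
            · have : B ^ 2 = 0 := by rw [← hsq, hA0]; ring
              have hB0 : B = 0 := pow_eq_zero_iff (by norm_num) |>.mp this
              rw [hA0, hB0]
            · have hB0 : B ≠ 0 := by
                intro h0
                apply hA0
                have : A ^ 2 = 0 := by rw [hsq, h0]; ring
                exact pow_eq_zero_iff (by norm_num) |>.mp this
              have hABB : B * B ^ 2 = A * B ^ 2 := by
                calc B * B ^ 2 = B ^ 3 := by ring
                  _ = A ^ 3 := hcu.symm
                  _ = A * A ^ 2 := by ring
                  _ = A * B ^ 2 := by rw [hsq]
              exact mul_right_cancel₀ (pow_ne_zero 2 hB0) hABB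
          field_simp
          linear_combination key - a (Sum.inr 2) * hu3
    -- conclude using the parametrization
    have hcomp : (aeval ![u1, u2, u3] : MvPolynomial (Fin 3) K →ₐ[K] K).comp φ = aeval a := by
      apply MvPolynomial.algHom_ext
      rintro (i | i) <;> fin_cases i <;>
        simp only [AlgHom.comp_apply, hφx1, hφx2, hφx3, hφy1, hφy2, hφy3, map_pow, map_mul,
          aeval_X, Matrix.cons_val_zero, Matrix.cons_val_one, Matrix.head_cons, Fin.isValue,
          Matrix.cons_val_two, Matrix.tail_cons, Fin.zero_eta, Fin.mk_one, Fin.reduceFinMk] <;>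
        first
        | exact e1 | exact e2 | exact e3 | exact e4 | exact e5
        | (rw [← e6]; try ring)
    have hφF : φ F = 0 := by rwa [RingHom.mem_ker] at hF
    have haev : (aeval a) F = 0 := by
      rw [← hcomp]
      simp [hφF]
    have : eval a F = aeval a F := by rw [← coe_aeval_eq_eval]; rfl
    rw [this, haev]
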